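/- Suppose min_k(s_{k+1}−s_k) ≥ t^{γ0} and fix 0 < β < γ < γ0. For each 1 ≤ k ≤ M−1 let L_k be the smallest index l with T(l) ≥ s_k + t^γ and U_k the largest index l with T(l) ≤ s_{k+1} − 1. Then E(L_{k+1} − U_k) ≥ t^{γ−β} for all sufficiently large t, and there exists a constant C > 0 such that for all sufficiently large t, P( ∩_{k=1}^{M−1} { L_{k+1} − U_k ≥ t^{γ−β}/2 } ) ≥ 1 − t·exp(−C·t^{γ−β}). -/

import Mathlib

open MeasureTheory ProbabilityTheory Finset Real
open scoped ProbabilityTheory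

/-- `#E(t)`, the number of sampling times among `{1, …, t}`. -/
def sampCount {Ω : Type*} (Z : ℕ → Ω → ℕ) (t : ℕ) (ω : Ω) : ℕ :=
  ((Finset.Icc 1 t).filter (fun j => Z j ω = 1)).card

/-- `T(l)`, the `l`-th smallest sampling time in `E(t)` (for `1 ≤ l ≤ #E(t)`). -/
def Tidx {Ω : Type*} (Z : ℕ → Ω → ℕ) (t : ℕ) (l : ℕ) (ω : Ω) : ℕ :=
  (((Finset.Icc 1 t).filter (fun j => Z j ω = 1)).sort (· ≤ ·)).getD (l - 1) 0

/-- `L_k`: the smallest index `l` with `T(l) ≥ s_k + t^γ`. -/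
noncomputable def Lidx {Ω : Type*} (Z : ℕ → Ω → ℕ) (s : ℕ → ℕ) (t : ℕ) (γ : ℝ)
    (k : ℕ) (ω : Ω) : ℕ :=
  sInf {l : ℕ | 1 ≤ l ∧ l ≤ sampCount Z t ω ∧
    (s k : ℝ) + (t : ℝ) ^ γ ≤ (Tidx Z t l ω : ℝ)}

/-- `U_k`: the largest index `l` with `T(l) ≤ s_{k+1} − 1`. -/
noncomputable def Uidx {Ω : Type*} (Z : ℕ → Ω → ℕ) (s : ℕ → ℕ) (t : ℕ)
    (k : ℕ) (ω : Ω) : ℕ :=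
  sSup {l : ℕ | 1 ≤ l ∧ l ≤ sampCount Z t ω ∧ Tidx Z t l ω ≤ s (k + 1) - 1}

set_option linter.unusedSectionVars false
set_option maxHeartbeats 1000000
open Filter
section Helpers

lemma gap_det (F : Finset ℕ) (A : ℕ) (b : ℝ) (hAb : (A:ℝ) < b)
    (h1 : ∃ j ∈ F, j ≤ A) (h2 : ∃ j ∈ F, b ≤ (j:ℝ)) :
    sSup {l | 1 ≤ l ∧ l ≤ F.card ∧ (F.sort (· ≤ ·)).getD (l-1) 0 ≤ A} + 1
      + (F.filter (fun j => A < j ∧ (j:ℝ) < b)).card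
    ≤ sInf {l | 1 ≤ l ∧ l ≤ F.card ∧ b ≤ ((F.sort (· ≤ ·)).getD (l-1) 0 : ℝ)} := by
  classical
  set ls := F.sort (· ≤ ·) with hls
  have hlen : ls.length = F.card := Finset.length_sort _
  have hmem : ∀ j, j ∈ ls ↔ j ∈ F := fun j => Finset.mem_sort _
  have hso : ls.Pairwise (· < ·) := (Finset.sortedLT_sort F).pairwise
  -- value at valid index
  have hget : ∀ l : ℕ, 1 ≤ l → l ≤ F.card → ∀ h : l - 1 < ls.length,
      ls.getD (l-1) 0 = ls[l-1] := fun l _ _ h => List.getD_eq_getElem ls 0 h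
  have hmono : ∀ l m : ℕ, 1 ≤ l → l < m → m ≤ F.card →
      ls.getD (l-1) 0 < ls.getD (m-1) 0 := by
    intro l m hl hlm hm
    have h1' : l - 1 < ls.length := by omega
    have h2' : m - 1 < ls.length := by omega
    rw [List.getD_eq_getElem ls 0 h1', List.getD_eq_getElem ls 0 h2']
    have : (⟨l-1, h1'⟩ : Fin ls.length) < ⟨m-1, h2'⟩ := by simp [Fin.lt_def]; omega
    simpa using hso.rel_get_of_lt this
  have hmono' : ∀ l m : ℕ, 1 ≤ l → l ≤ m → m ≤ F.card →
      ls.getD (l-1) 0 ≤ ls.getD (m-1) 0 := by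
    intro l m hl hlm hm
    rcases eq_or_lt_of_le hlm with rfl | h
    · exact le_refl _
    · exact (hmono l m hl h hm).le
  -- index map
  have hidx : ∀ j ∈ F, List.idxOf j ls < ls.length ∧
      ls.getD (List.idxOf j ls + 1 - 1) 0 = j := by
    intro j hj
    have hmem' : j ∈ ls := (hmem j).2 hj
    have h : List.idxOf j ls < ls.length := List.idxOf_lt_length_iff.2 hmem'
    refine ⟨h, ?_⟩
    simp only [Nat.add_sub_cancel]
    rw [List.getD_eq_getElem ls 0 h]
    exact List.getElem_idxOf h
  obtain ⟨j1, hj1F, hj1A⟩ := h1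
  obtain ⟨j2, hj2F, hj2b⟩ := h2
  set SU := {l | 1 ≤ l ∧ l ≤ F.card ∧ ls.getD (l-1) 0 ≤ A} with hSU
  set SL := {l | 1 ≤ l ∧ l ≤ F.card ∧ b ≤ (ls.getD (l-1) 0 : ℝ)} with hSL
  have hU1 : List.idxOf j1 ls + 1 ∈ SU := by
    obtain ⟨h, heq⟩ := hidx j1 hj1F
    exact ⟨by omega, by omega, by rw [heq]; exact hj1A⟩
  have hL1 : List.idxOf j2 ls + 1 ∈ SL := by
    obtain ⟨h, heq⟩ := hidx j2 hj2F
    exact ⟨by omega, by omega, by rw [heq]; exact hj2b⟩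
  have hUbdd : BddAbove SU := ⟨F.card, fun l hl => hl.2.1⟩
  have hUmem : sSup SU ∈ SU := Nat.sSup_mem ⟨_, hU1⟩ hUbdd
  have hLmem : sInf SL ∈ SL := Nat.sInf_mem ⟨_, hL1⟩
  set U := sSup SU
  set L := sInf SL
  have hUL : U < L := by
    by_contra h
    push_neg at h
    have := hmono' L U hLmem.1 h hUmem.2.1
    have h2 : ((ls.getD (L-1) 0 : ℕ) : ℝ) ≤ (ls.getD (U-1) 0 : ℕ) := Nat.cast_le.2 this
    have h3 : ((ls.getD (U-1) 0 : ℕ) : ℝ) ≤ A := Nat.cast_le.2 hUmem.2.2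
    linarith [hLmem.2.2]
  have hinj : ∀ j ∈ F.filter (fun j => A < j ∧ (j:ℝ) < b),
      List.idxOf j ls + 1 ∈ Finset.Ioo U L := by
    intro j hj
    rw [Finset.mem_filter] at hj
    obtain ⟨hjF, hjA, hjb⟩ := hj
    obtain ⟨h, heq⟩ := hidx j hjF
    set m := List.idxOf j ls + 1
    have hm1 : 1 ≤ m := by omega
    have hmc : m ≤ F.card := by omega
    rw [Finset.mem_Ioo]
    constructor
    · by_contra hc
      push_neg at hc
      have := hmono' m U hm1 hc hUmem.2.1
      rw [heq] at this
      have := hUmem.2.2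
      omega
    · by_contra hc
      push_neg at hc
      have := hmono' L m hLmem.1 hc hmc
      have h2 : ((ls.getD (L-1) 0 : ℕ) : ℝ) ≤ (ls.getD (m-1) 0 : ℕ) := Nat.cast_le.2 this
      rw [heq] at h2
      linarith [hLmem.2.2]
  have hcard : (F.filter (fun j => A < j ∧ (j:ℝ) < b)).card ≤ (Finset.Ioo U L).card := by
    apply Finset.card_le_card_of_injOn (fun j => List.idxOf j ls + 1) hinj
    intro x hx y hy hxy
    simp only [Finset.coe_filter, Set.mem_setOf_eq] at hx hy
    have hxy' : List.idxOf x ls + 1 = List.idxOf y ls + 1 := hxy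
    exact (List.idxOf_inj ((hmem x).2 hx.1)).1 (by omega)
  rw [Nat.card_Ioo] at hcard
  omega

lemma measurable_factor {Ω : Type*} [MeasurableSpace Ω] (Z : ℕ → Ω → ℕ)
    (hZ : ∀ j, Measurable (Z j)) (t : ℕ) (g : Ω → ℕ)
    (hg : ∀ ω ω', (∀ j, j ≤ t → Z j ω = Z j ω') → g ω = g ω') :
    Measurable g := by
  classical
  set W : Ω → (Fin (t+1) → ℕ) := fun ω i => Z i ω with hW
  have hWm : Measurable W := measurable_pi_lambda _ (fun i => hZ i)
  set G : (Fin (t+1) → ℕ) → ℕ := fun v => if h : ∃ ω, W ω = v then g h.choose else 0 with hG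
  have : g = G ∘ W := by
    funext ω
    have h : ∃ ω', W ω' = W ω := ⟨ω, rfl⟩
    simp only [hG, Function.comp_apply, dif_pos h]
    apply hg
    intro j hj
    exact (congrFun h.choose_spec ⟨j, by omega⟩).symm
  rw [this]
  exact (measurable_of_countable G).comp hWm

lemma filter_eq_of_agree {Ω : Type*} (Z : ℕ → Ω → ℕ) (t : ℕ) (ω ω' : Ω)
    (h : ∀ j, j ≤ t → Z j ω = Z j ω') :
    (Finset.Icc 1 t).filter (fun j => Z j ω = 1) =
    (Finset.Icc 1 t).filter (fun j => Z j ω' = 1) := by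
  apply Finset.filter_congr
  intro j hj
  rw [Finset.mem_Icc] at hj
  rw [h j hj.2]

lemma measurable_Lidx {Ω : Type*} [MeasurableSpace Ω] (Z : ℕ → Ω → ℕ)
    (hZ : ∀ j, Measurable (Z j)) (s : ℕ → ℕ) (t : ℕ) (γ : ℝ) (k : ℕ) :
    Measurable (Lidx Z s t γ k) := by
  apply measurable_factor Z hZ t
  intro ω ω' h
  have hf := filter_eq_of_agree Z t ω ω' h
  unfold Lidx sampCount Tidx
  rw [hf]

lemma measurable_Uidx {Ω : Type*} [MeasurableSpace Ω] (Z : ℕ → Ω → ℕ)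
    (hZ : ∀ j, Measurable (Z j)) (s : ℕ → ℕ) (t : ℕ) (k : ℕ) :
    Measurable (Uidx Z s t k) := by
  apply measurable_factor Z hZ t
  intro ω ω' h
  have hf := filter_eq_of_agree Z t ω ω' h
  unfold Uidx sampCount Tidx
  rw [hf]

-- sum of 0/1 values = card of filter
lemma sum_bern_eq_card {Ω : Type} (Z : ℕ → Ω → ℕ) (hZ01 : ∀ j ω, Z j ω = 0 ∨ Z j ω = 1)
    (I : Finset ℕ) (ω : Ω) :
    ∑ j ∈ I, (Z j ω : ℝ) = ((I.filter (fun j => Z j ω = 1)).card : ℝ) := by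
  classical
  rw [← Finset.sum_filter_add_sum_filter_not I (fun j => Z j ω = 1)]
  have h1 : ∑ j ∈ I.filter (fun j => Z j ω = 1), (Z j ω : ℝ)
      = ((I.filter (fun j => Z j ω = 1)).card : ℝ) := by
    rw [Finset.sum_congr rfl (fun j hj => ?_), Finset.sum_const, nsmul_eq_mul, mul_one]
    rw [Finset.mem_filter] at hj
    rw [hj.2]; norm_num
  have h2 : ∑ j ∈ I.filter (fun j => ¬(Z j ω = 1)), (Z j ω : ℝ) = 0 := by
    apply Finset.sum_eq_zero
    intro j hj
    rw [Finset.mem_filter] at hj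
    rcases hZ01 j ω with h | h
    · rw [h]; norm_num
    · exact absurd h hj.2
  rw [h1, h2, add_zero]

-- monotonicity of s
lemma s_mono (M : ℕ) (s : ℕ → ℕ) (hmono : ∀ k : ℕ, 1 ≤ k → k < M → s k < s (k + 1)) :
    ∀ a b : ℕ, 1 ≤ a → a ≤ b → b ≤ M → s a ≤ s b := by
  intro a b ha hab hbM
  induction b with
  | zero => omega
  | succ n ih =>
    rcases Nat.lt_or_ge a (n+1) with h | h
    · have h1 : s a ≤ s n := ih (by omega) (by omega)
      have h2 : s n < s (n+1) := hmono n (by omega) (by omega)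
      omega
    · have : a = n + 1 := by omega
      rw [this]

-- eventual conditions
lemma eventually_conds (γ0 β γ C : ℝ) (hβ0 : 0 < β) (hβγ : β < γ) (hγγ0 : γ < γ0)
    (hγ01 : γ0 ≤ 1) (hC : 0 < C) :
    ∃ t0 : ℕ, ∀ t : ℕ, t0 ≤ t →
      (1 ≤ t ∧ (t:ℝ)^γ + 1 ≤ (t:ℝ)^γ0 ∧
       (3*(t:ℝ)+1) * Real.exp (-((t:ℝ)^(γ0-β) - (t:ℝ)^(γ-β))) ≤ 1 ∧
       2*(t:ℝ)^(γ-β) ≤ (t:ℝ)^(γ0-β) ∧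
       2 * Real.exp (-C * (t:ℝ)^(γ-β)) ≤ 1) := by
  have key : ∀ᶠ x : ℝ in atTop,
      (x^γ + 1 ≤ x^γ0 ∧ (3*x+1) * Real.exp (-(x^(γ0-β) - x^(γ-β))) ≤ 1 ∧
       2*x^(γ-β) ≤ x^(γ0-β) ∧ 2 * Real.exp (-C * x^(γ-β)) ≤ 1) := by
    have hx1 : ∀ᶠ x : ℝ in atTop, (1:ℝ) ≤ x := eventually_ge_atTop 1
    -- x^(γ0-γ) ≥ 2 eventually
    have h2a : ∀ᶠ x : ℝ in atTop, (2:ℝ) ≤ x^(γ0-γ) :=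
      (tendsto_rpow_atTop (by linarith)).eventually_ge_atTop 2
    -- x^γ ≥ ... condition 1 : x^γ+1 ≤ x^γ0
    have hc1 : ∀ᶠ x : ℝ in atTop, x^γ + 1 ≤ x^γ0 := by
      filter_upwards [hx1, h2a] with x hx h2
      have hx0 : (0:ℝ) < x := by linarith
      have hsplit : x^γ0 = x^(γ0-γ) * x^γ := by
        rw [← Real.rpow_add hx0]; ring_nf
      have hγ1 : (1:ℝ) ≤ x^γ := Real.one_le_rpow hx (by linarith)
      nlinarith [hγ1, h2]
    -- condition 3 : 2x^(γ-β) ≤ x^(γ0-β)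
    have hc3 : ∀ᶠ x : ℝ in atTop, 2*x^(γ-β) ≤ x^(γ0-β) := by
      filter_upwards [hx1, h2a] with x hx h2
      have hx0 : (0:ℝ) < x := by linarith
      have hsplit : x^(γ0-β) = x^(γ0-γ) * x^(γ-β) := by
        rw [← Real.rpow_add hx0]; ring_nf
      have h0 : (0:ℝ) ≤ x^(γ-β) := (Real.rpow_pos_of_pos hx0 _).le
      nlinarith
    -- condition 4 : 2 exp(-C x^(γ-β)) ≤ 1
    have hc4 : ∀ᶠ x : ℝ in atTop, 2 * Real.exp (-C * x^(γ-β)) ≤ 1 := by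
      have : ∀ᶠ x : ℝ in atTop, Real.log 2 / C ≤ x^(γ-β) :=
        (tendsto_rpow_atTop (by linarith)).eventually_ge_atTop _
      filter_upwards [this] with x hx
      have h1 : Real.log 2 ≤ C * x^(γ-β) := by
        rw [div_le_iff₀ hC] at hx; linarith
      have h2 : Real.exp (Real.log 2) ≤ Real.exp (C * x^(γ-β)) := Real.exp_le_exp.2 h1
      rw [Real.exp_log two_pos] at h2
      rw [neg_mul, Real.exp_neg]
      rw [mul_inv_le_iff₀ (Real.exp_pos _)]
      linarith
    -- condition 2
    have hc2 : ∀ᶠ x : ℝ in atTop, (3*x+1) * Real.exp (-(x^(γ0-β) - x^(γ-β))) ≤ 1 := by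
      have hlog : ∀ᶠ x : ℝ in atTop, Real.log x ≤ (1/4) * x^(γ0-β) := by
        have := (isLittleO_log_rpow_atTop (by linarith : (0:ℝ) < γ0 - β)).def
          (by norm_num : (0:ℝ) < 1/4)
        filter_upwards [this, hx1] with x hx h1x
        have : |Real.log x| ≤ 1/4 * |x^(γ0-β)| := by simpa [Real.norm_eq_abs] using hx
        have h2 : (0:ℝ) ≤ x^(γ0-β) := Real.rpow_nonneg (by linarith) _
        calc Real.log x ≤ |Real.log x| := le_abs_self _
          _ ≤ 1/4 * |x^(γ0-β)| := this
          _ = 1/4 * x^(γ0-β) := by rw [abs_of_nonneg h2]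
      filter_upwards [hlog, hc3, eventually_ge_atTop (4:ℝ)] with x hlg h3 hx4
      have hx0 : (0:ℝ) < x := by linarith
      have hb : (3*x+1) ≤ x^2 := by nlinarith
      have hlog2 : Real.log (3*x+1) ≤ 2 * Real.log x := by
        calc Real.log (3*x+1) ≤ Real.log (x^2) :=
              Real.log_le_log (by linarith) hb
          _ = 2 * Real.log x := by
              rw [Real.log_pow]; norm_num
      have hkey : Real.log (3*x+1) ≤ x^(γ0-β) - x^(γ-β) := by
        have : 2 * Real.log x ≤ (1/2) * x^(γ0-β) := by linarith
        nlinarith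
      have h31 : (0:ℝ) < 3*x+1 := by linarith
      rw [← Real.exp_log h31, ← Real.exp_add]
      have : Real.log (3*x+1) + -(x^(γ0-β) - x^(γ-β)) ≤ 0 := by linarith
      calc Real.exp _ ≤ Real.exp 0 := Real.exp_le_exp.2 this
        _ = 1 := Real.exp_zero
    filter_upwards [hc1, hc2, hc3, hc4] with x h1 h2 h3 h4
    exact ⟨h1, h2, h3, h4⟩
  have keyN : ∀ᶠ t : ℕ in atTop,
      ((t:ℝ)^γ + 1 ≤ (t:ℝ)^γ0 ∧ (3*(t:ℝ)+1) * Real.exp (-((t:ℝ)^(γ0-β) - (t:ℝ)^(γ-β))) ≤ 1 ∧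
       2*(t:ℝ)^(γ-β) ≤ (t:ℝ)^(γ0-β) ∧ 2 * Real.exp (-C * (t:ℝ)^(γ-β)) ≤ 1) :=
    tendsto_natCast_atTop_atTop.eventually key
  obtain ⟨t0, ht0⟩ := eventually_atTop.mp (keyN.and (eventually_ge_atTop 1))
  exact ⟨t0, fun t ht => ⟨(ht0 t ht).2, (ht0 t ht).1.1, (ht0 t ht).1.2.1,
    (ht0 t ht).1.2.2.1, (ht0 t ht).1.2.2.2⟩⟩


variable {Ω : Type} [MeasureSpace Ω] [IsProbabilityMeasure (ℙ : Measure Ω)]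
  {Z : ℕ → Ω → ℕ}
-- pointwise rewriting of f ∘ (Z j) as const + indicator
lemma comp_bern_eq (j : ℕ) (hZ01 : ∀ ω, Z j ω = 0 ∨ Z j ω = 1) (f : ℕ → ℝ) :
    (fun ω => f (Z j ω)) =
      fun ω => f 0 + Set.indicator {ω | Z j ω = 1} (fun _ => f 1 - f 0) ω := by
  funext ω
  rcases hZ01 ω with h | h
  · rw [h, Set.indicator_of_notMem (by simp [h] : ω ∉ {ω | Z j ω = 1})]; ring
  · rw [h, Set.indicator_of_mem (by simp [h] : ω ∈ {ω | Z j ω = 1})]; ring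

lemma integrable_comp_bern (j : ℕ) (hZm : Measurable (Z j))
    (hZ01 : ∀ ω, Z j ω = 0 ∨ Z j ω = 1) (f : ℕ → ℝ) :
    Integrable (fun ω => f (Z j ω)) ℙ := by
  rw [comp_bern_eq j hZ01 f]
  exact (integrable_const (f 0)).add
    ((integrable_const (f 1 - f 0)).indicator (hZm (measurableSet_singleton 1)))

lemma integral_comp_bern (j : ℕ) (hZm : Measurable (Z j))
    (hZ01 : ∀ ω, Z j ω = 0 ∨ Z j ω = 1) (f : ℕ → ℝ) :
    ∫ ω, f (Z j ω) ∂ℙ = f 0 + (f 1 - f 0) * (ℙ {ω | Z j ω = 1}).toReal := by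
  have hms : MeasurableSet {ω | Z j ω = 1} := hZm (measurableSet_singleton 1)
  rw [comp_bern_eq j hZ01 f]
  rw [integral_add (integrable_const _) ((integrable_const (f 1 - f 0)).indicator hms)]
  rw [integral_indicator_const _ hms]
  simp [mul_comm, measureReal_def]

lemma prob_zero_eq (j : ℕ) (hZm : Measurable (Z j)) (hZ01 : ∀ ω, Z j ω = 0 ∨ Z j ω = 1)
    {p : ℝ} (hp : ℙ {ω | Z j ω = 1} = ENNReal.ofReal p) (hp0 : 0 ≤ p) :
    ℙ {ω | Z j ω = 0} = ENNReal.ofReal (1 - p) := by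
  have hms : MeasurableSet {ω | Z j ω = 1} := hZm (measurableSet_singleton 1)
  have hset : {ω | Z j ω = 0} = {ω | Z j ω = 1}ᶜ := by
    ext ω; simp only [Set.mem_setOf_eq, Set.mem_compl_iff]
    rcases hZ01 ω with h | h <;> simp [h]
  rw [hset, measure_compl hms (measure_ne_top _ _), hp,
    measure_univ, ENNReal.ofReal_sub 1 hp0, ENNReal.ofReal_one]

lemma prob_all_zero_le (hZm : ∀ j, Measurable (Z j))
    (hZ01 : ∀ j ω, Z j ω = 0 ∨ Z j ω = 1)
    (hind : iIndepFun Z ℙ) (J : Finset ℕ) (p : ℕ → ℝ)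
    (hp : ∀ j ∈ J, ℙ {ω | Z j ω = 1} = ENNReal.ofReal (p j))
    (hp0 : ∀ j ∈ J, 0 ≤ p j) (hp1 : ∀ j ∈ J, p j ≤ 1) :
    ℙ {ω | ∀ j ∈ J, Z j ω = 0} ≤ ENNReal.ofReal (Real.exp (-∑ j ∈ J, p j)) := by
  have hset : {ω | ∀ j ∈ J, Z j ω = 0} = ⋂ j ∈ J, Z j ⁻¹' {0} := by
    ext ω; simp
  rw [hset, hind.measure_inter_preimage_eq_mul J (fun i _ => measurableSet_singleton 0)]
  have heq : ∀ j ∈ J, ℙ (Z j ⁻¹' {0}) = ENNReal.ofReal (1 - p j) := by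
    intro j hj
    have : Z j ⁻¹' {0} = {ω | Z j ω = 0} := rfl
    rw [this, prob_zero_eq j (hZm j) (hZ01 j) (hp j hj) (hp0 j hj)]
  calc ∏ j ∈ J, ℙ (Z j ⁻¹' {0}) = ∏ j ∈ J, ENNReal.ofReal (1 - p j) :=
        Finset.prod_congr rfl heq
    _ ≤ ∏ j ∈ J, ENNReal.ofReal (Real.exp (-p j)) := by
        apply Finset.prod_le_prod' <;> try skip
        intro j hj
        apply ENNReal.ofReal_le_ofReal
        nlinarith [Real.add_one_le_exp (-p j)]
    _ = ENNReal.ofReal (∏ j ∈ J, Real.exp (-p j)) :=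
        (ENNReal.ofReal_prod_of_nonneg (fun j _ => (Real.exp_pos _).le)).symm
    _ = ENNReal.ofReal (Real.exp (-∑ j ∈ J, p j)) := by
        rw [← Real.exp_sum]; congr 1; rw [← Finset.sum_neg_distrib]

lemma chernoff_lower (hZm : ∀ j, Measurable (Z j))
    (hZ01 : ∀ j ω, Z j ω = 0 ∨ Z j ω = 1)
    (hind : iIndepFun Z ℙ) (J : Finset ℕ) (p : ℕ → ℝ)
    (hp : ∀ j ∈ J, ℙ {ω | Z j ω = 1} = ENNReal.ofReal (p j))
    (hp0 : ∀ j ∈ J, 0 ≤ p j) (hp1 : ∀ j ∈ J, p j ≤ 1) (ε : ℝ) :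
    ℙ {ω | (∑ j ∈ J, (Z j ω : ℝ)) ≤ ε}
      ≤ ENNReal.ofReal (Real.exp (Real.log 2 * ε - (∑ j ∈ J, p j) / 2)) := by
  classical
  set W : ℕ → Ω → ℝ := fun j ω => (Z j ω : ℝ) with hW
  have hWm : ∀ j, Measurable (W j) :=
    fun j => (measurable_of_countable (Nat.cast : ℕ → ℝ)).comp (hZm j)
  have hindW : iIndepFun W ℙ :=
    hind.comp (fun _ => (Nat.cast : ℕ → ℝ)) (fun _ => measurable_of_countable _)
  set s0 : ℝ := -Real.log 2 with hs0
  have hs0le : s0 ≤ 0 := neg_nonpos.mpr (Real.log_nonneg one_le_two)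
  have h_int : ∀ j ∈ J, Integrable (fun ω => Real.exp (s0 * W j ω)) ℙ := by
    intro j _
    exact integrable_comp_bern j (hZm j) (hZ01 j) (fun n => Real.exp (s0 * n))
  have hXsum : (fun ω => ∑ j ∈ J, (Z j ω : ℝ)) = ∑ j ∈ J, W j := by
    funext ω; rw [Finset.sum_apply]
  have h_int_sum : Integrable (fun ω => Real.exp (s0 * (∑ j ∈ J, W j) ω)) ℙ :=
    iIndepFun.integrable_exp_mul_sum hindW hWm h_int
  have hmgf : ∀ j ∈ J, mgf (W j) ℙ s0 = 1 - p j / 2 := by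
    intro j hj
    have hh := integral_comp_bern (Z := Z) j (hZm j) (hZ01 j) (fun n => Real.exp (s0 * n))
    simp only [Nat.cast_zero, Nat.cast_one, mul_zero, mul_one, Real.exp_zero] at hh
    rw [hp j hj, ENNReal.toReal_ofReal (hp0 j hj)] at hh
    have hexp : Real.exp s0 = 1/2 := by
      rw [hs0]; norm_num [Real.exp_neg, Real.exp_log]
    rw [hexp] at hh
    show ∫ ω, Real.exp (s0 * ((Z j ω : ℕ) : ℝ)) ∂ℙ = 1 - p j / 2
    rw [hh]; ring
  have hchern := measure_le_le_exp_mul_mgf (μ := (ℙ : Measure Ω))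
      (X := ∑ j ∈ J, W j) ε hs0le h_int_sum
  rw [hindW.mgf_sum hWm J] at hchern
  have hprod : ∏ j ∈ J, mgf (W j) ℙ s0 ≤ Real.exp (-(∑ j ∈ J, p j) / 2) := by
    calc ∏ j ∈ J, mgf (W j) ℙ s0 = ∏ j ∈ J, (1 - p j / 2) := Finset.prod_congr rfl hmgf
      _ ≤ ∏ j ∈ J, Real.exp (-(p j / 2)) := by
          apply Finset.prod_le_prod
          · intro j hj; have := hp1 j hj; have := hp0 j hj; linarith
          · intro j hj; nlinarith [Real.add_one_le_exp (-(p j / 2))]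
      _ = Real.exp (∑ j ∈ J, -(p j / 2)) := (Real.exp_sum _ _).symm
      _ = Real.exp (-(∑ j ∈ J, p j) / 2) := by
          congr 1; simp [neg_div, Finset.sum_div, Finset.sum_neg_distrib]
  have hset2 : {ω | (∑ j ∈ J, (Z j ω : ℝ)) ≤ ε} = {ω | (∑ j ∈ J, W j) ω ≤ ε} := by
    ext ω; simp [Finset.sum_apply, hW]
  rw [hset2, ENNReal.le_ofReal_iff_toReal_le (measure_ne_top _ _) (Real.exp_pos _).le]
  have hbound : (ℙ {ω | (∑ j ∈ J, W j) ω ≤ ε}).toReal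
      ≤ Real.exp (Real.log 2 * ε - (∑ j ∈ J, p j) / 2) := by
    calc (ℙ {ω | (∑ j ∈ J, W j) ω ≤ ε}).toReal
        ≤ Real.exp (-s0 * ε) * ∏ j ∈ J, mgf (W j) ℙ s0 := hchern
      _ ≤ Real.exp (-s0 * ε) * Real.exp (-(∑ j ∈ J, p j) / 2) := by
          apply mul_le_mul_of_nonneg_left hprod (Real.exp_pos _).le
      _ = Real.exp (Real.log 2 * ε - (∑ j ∈ J, p j) / 2) := by
          rw [← Real.exp_add]; congr 1; rw [hs0]; ring
  exact hbound

end Helpers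
section Det
variable {Ω : Type}

lemma sampCount_le (Z : ℕ → Ω → ℕ) (t : ℕ) (ω : Ω) : sampCount Z t ω ≤ t := by
  unfold sampCount
  calc ((Finset.Icc 1 t).filter (fun j => Z j ω = 1)).card ≤ (Finset.Icc 1 t).card :=
        Finset.card_filter_le _ _
    _ = t := by rw [Nat.card_Icc]; omega

lemma Uidx_le (Z : ℕ → Ω → ℕ) (s : ℕ → ℕ) (t : ℕ) (k : ℕ) (ω : Ω) :
    Uidx Z s t k ω ≤ t := by
  unfold Uidx
  by_cases h : {l : ℕ | 1 ≤ l ∧ l ≤ sampCount Z t ω ∧ Tidx Z t l ω ≤ s (k + 1) - 1}.Nonempty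
  · have hb : BddAbove {l : ℕ | 1 ≤ l ∧ l ≤ sampCount Z t ω ∧ Tidx Z t l ω ≤ s (k + 1) - 1} :=
      ⟨sampCount Z t ω, fun l hl => hl.2.1⟩
    exact le_trans (Nat.sSup_mem h hb).2.1 (sampCount_le Z t ω)
  · rw [Set.not_nonempty_iff_eq_empty.mp h]
    simp

lemma Lidx_le (Z : ℕ → Ω → ℕ) (s : ℕ → ℕ) (t : ℕ) (γ : ℝ) (k : ℕ) (ω : Ω) :
    Lidx Z s t γ k ω ≤ t := by
  unfold Lidx
  by_cases h : {l : ℕ | 1 ≤ l ∧ l ≤ sampCount Z t ω ∧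
      (s k : ℝ) + (t : ℝ) ^ γ ≤ (Tidx Z t l ω : ℝ)}.Nonempty
  · exact le_trans (Nat.sInf_mem h).2.1 (sampCount_le Z t ω)
  · rw [Set.not_nonempty_iff_eq_empty.mp h]
    simp

lemma det_core (Z : ℕ → Ω → ℕ) (s : ℕ → ℕ) (t : ℕ) (γ : ℝ) (k : ℕ)
    (ht1 : 1 ≤ t) (h2k : 2 ≤ s (k+1)) (hb2t : s (k+1) + ⌈(t:ℝ)^γ⌉₊ ≤ t)
    (ω : Ω) (hZ1 : Z 1 ω = 1)
    (hj2 : ∃ j ∈ Finset.Icc (s (k+1) + ⌈(t:ℝ)^γ⌉₊) t, Z j ω = 1) :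
    Uidx Z s t k ω + 1 +
      ((Finset.Ico (s (k+1)) (s (k+1) + ⌈(t:ℝ)^γ⌉₊)).filter (fun j => Z j ω = 1)).card
    ≤ Lidx Z s t γ (k+1) ω := by
  classical
  set F := (Finset.Icc 1 t).filter (fun j => Z j ω = 1) with hF
  have htR : (0:ℝ) < (t:ℝ)^γ :=
    Real.rpow_pos_of_pos (by exact_mod_cast Nat.lt_of_lt_of_le Nat.zero_lt_one ht1) γ
  have hAb : ((s (k+1) - 1 : ℕ):ℝ) < (s (k+1) : ℝ) + (t:ℝ)^γ := by
    have h1 : ((s (k+1) - 1 : ℕ):ℝ) ≤ (s (k+1) : ℝ) := Nat.cast_le.2 (Nat.sub_le _ _)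
    linarith
  have h1 : ∃ j ∈ F, j ≤ s (k+1) - 1 := by
    refine ⟨1, ?_, by omega⟩
    rw [hF, Finset.mem_filter, Finset.mem_Icc]
    exact ⟨⟨le_refl 1, ht1⟩, hZ1⟩
  have h2 : ∃ j ∈ F, (s (k+1) : ℝ) + (t:ℝ)^γ ≤ (j:ℝ) := by
    obtain ⟨j, hjmem, hjZ⟩ := hj2
    rw [Finset.mem_Icc] at hjmem
    refine ⟨j, ?_, ?_⟩
    · rw [hF, Finset.mem_filter, Finset.mem_Icc]
      exact ⟨⟨by omega, hjmem.2⟩, hjZ⟩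
    · have hceil : (s (k+1) : ℝ) + (t:ℝ)^γ ≤ ((s (k+1) + ⌈(t:ℝ)^γ⌉₊ : ℕ) : ℝ) := by
        push_cast
        linarith [Nat.le_ceil ((t:ℝ)^γ)]
      have : ((s (k+1) + ⌈(t:ℝ)^γ⌉₊ : ℕ) : ℝ) ≤ (j:ℝ) := Nat.cast_le.2 hjmem.1
      linarith
  have main := gap_det F (s (k+1) - 1) ((s (k+1) : ℝ) + (t:ℝ)^γ) hAb h1 h2
  have hsub : (Finset.Ico (s (k+1)) (s (k+1) + ⌈(t:ℝ)^γ⌉₊)).filter (fun j => Z j ω = 1)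
      ⊆ F.filter (fun j => s (k+1) - 1 < j ∧ (j:ℝ) < (s (k+1) : ℝ) + (t:ℝ)^γ) := by
    intro j hj
    rw [Finset.mem_filter, Finset.mem_Ico] at hj
    rw [Finset.mem_filter, hF, Finset.mem_filter, Finset.mem_Icc]
    refine ⟨⟨⟨by omega, by omega⟩, hj.2⟩, by omega, ?_⟩
    have hj1 : (j:ℝ) ≤ ((s (k+1) + ⌈(t:ℝ)^γ⌉₊ - 1 : ℕ):ℝ) := Nat.cast_le.2 (by omega)
    have hc : ((s (k+1) + ⌈(t:ℝ)^γ⌉₊ - 1 : ℕ):ℝ) < (s (k+1) : ℝ) + (t:ℝ)^γ := by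
      have h0 : (((s (k+1) + ⌈(t:ℝ)^γ⌉₊ - 1 : ℕ)):ℝ) = (s (k+1) : ℝ) + (⌈(t:ℝ)^γ⌉₊:ℝ) - 1 := by
        have : 1 ≤ s (k+1) + ⌈(t:ℝ)^γ⌉₊ := by omega
        push_cast [Nat.cast_sub this]
        ring
      rw [h0]
      have := Nat.ceil_lt_add_one (le_of_lt htR)
      linarith
    linarith
  have hcard := Finset.card_le_card hsub
  have hfin : Uidx Z s t k ω + 1 +
      (F.filter (fun j => s (k+1) - 1 < j ∧ (j:ℝ) < (s (k+1) : ℝ) + (t:ℝ)^γ)).card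
      ≤ Lidx Z s t γ (k+1) ω := main
  omega

end Det
section Parts
variable {Ω : Type} [MeasureSpace Ω]

-- common setup facts, packaged
lemma setup_facts [IsProbabilityMeasure (ℙ : Measure Ω)]
    (γ0 β γ : ℝ) (hβ0 : 0 < β) (hβγ : β < γ) (hγγ0 : γ < γ0) (hγ01 : γ0 ≤ 1)
    (t M : ℕ) (s : ℕ → ℕ) (Z : ℕ → Ω → ℕ)
    (ht1 : 1 ≤ t)
    (hC2 : (t:ℝ)^γ + 1 ≤ (t:ℝ)^γ0)
    (hM : 2 ≤ M) (hs1 : s 1 = 1) (hsM : s M = t)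
    (hmono : ∀ k : ℕ, 1 ≤ k → k < M → s k < s (k + 1))
    (hgap : ∀ k : ℕ, 1 ≤ k → k < M → (t:ℝ)^γ0 ≤ (s (k + 1) : ℝ) - (s k : ℝ))
    (hZm : ∀ j, Measurable (Z j)) (hZ01 : ∀ j ω, Z j ω = 0 ∨ Z j ω = 1)
    (hZp : ∀ j : ℕ, 1 ≤ j → ℙ {ω | Z j ω = 1} = ENNReal.ofReal ((j:ℝ)^(-β)))
    (hind : iIndepFun Z ℙ)
    (k : ℕ) (hk1 : 1 ≤ k) (hkM : k + 1 < M) :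
    2 ≤ s (k+1) ∧ s (k+1) + ⌈(t:ℝ)^γ⌉₊ ≤ t ∧
    (t:ℝ)^(γ-β) ≤ ∑ j ∈ Finset.Ico (s (k+1)) (s (k+1) + ⌈(t:ℝ)^γ⌉₊), (j:ℝ)^(-β) ∧
    ℙ {ω | ∀ j ∈ Finset.Icc (s (k+1) + ⌈(t:ℝ)^γ⌉₊) t, Z j ω = 0}
      ≤ ENNReal.ofReal (Real.exp (-((t:ℝ)^(γ0-β) - (t:ℝ)^(γ-β)))) ∧
    ℙ {ω | Z 1 ω = 0} = 0 := by
  have hT0 : (0:ℝ) < (t:ℝ) := by exact_mod_cast Nat.lt_of_lt_of_le Nat.zero_lt_one ht1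
  have hT1 : (1:ℝ) ≤ (t:ℝ) := Nat.one_le_cast.2 ht1
  set T := (t:ℝ) with hTdef
  set cg := ⌈T^γ⌉₊ with hcg
  set b2 := s (k+1) + cg with hb2
  have hsm := s_mono M s hmono
  have h2k : 2 ≤ s (k+1) := by
    have h12 : s 1 < s 2 := hmono 1 le_rfl (by omega)
    have h2k1 : s 2 ≤ s (k+1) := hsm 2 (k+1) (by omega) (by omega) (by omega)
    omega
  have hcgR : (cg:ℝ) < T^γ + 1 := Nat.ceil_lt_add_one (Real.rpow_nonneg hT0.le γ)
  have hcg_ge : T^γ ≤ (cg:ℝ) := Nat.le_ceil _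
  have hskt : (s (k+1):ℝ) + T^γ0 ≤ T := by
    have hg := hgap (k+1) (by omega) hkM
    have hle : s (k+2) ≤ t := hsM ▸ hsm (k+2) M (by omega) (by omega) (le_refl M)
    have hle' : (s (k+2):ℝ) ≤ T := Nat.cast_le.2 hle
    linarith
  have hb2t : b2 ≤ t := by
    have h : (b2:ℝ) ≤ (t:ℝ) := by
      rw [hb2]; push_cast
      linarith
    exact_mod_cast h
  set p : ℕ → ℝ := fun j => (j:ℝ)^(-β) with hp
  have hp0 : ∀ j : ℕ, 0 ≤ p j := fun j => Real.rpow_nonneg (Nat.cast_nonneg j) _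
  have hp1 : ∀ j : ℕ, 1 ≤ j → p j ≤ 1 := by
    intro j hj
    have h := Real.rpow_le_rpow_of_exponent_le (Nat.one_le_cast.2 hj)
      (by linarith : -β ≤ (0:ℝ))
    simpa using h
  have hplow : ∀ j : ℕ, 1 ≤ j → j ≤ t → T^(-β) ≤ p j := by
    intro j hj1 hjt
    exact Real.rpow_le_rpow_of_nonpos (by exact_mod_cast hj1) (Nat.cast_le.2 hjt)
      (by linarith)
  have hTnb : (0:ℝ) ≤ T^(-β) := Real.rpow_nonneg hT0.le _
  set I := Finset.Ico (s (k+1)) b2 with hI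
  set J := Finset.Icc b2 t with hJ
  have hIcard : I.card = cg := by rw [hI, Nat.card_Ico]; omega
  have hImem : ∀ j ∈ I, 1 ≤ j ∧ j ≤ t := by
    intro j hj; rw [hI, Finset.mem_Ico] at hj; omega
  have hJmem : ∀ j ∈ J, 1 ≤ j ∧ j ≤ t := by
    intro j hj; rw [hJ, Finset.mem_Icc] at hj; omega
  have hSI : T^(γ-β) ≤ ∑ j ∈ I, p j := by
    calc T^(γ-β) = T^γ * T^(-β) := by
          rw [← Real.rpow_add hT0]; ring_nf
      _ ≤ (cg:ℝ) * T^(-β) := mul_le_mul_of_nonneg_right hcg_ge hTnb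
      _ = ∑ _j ∈ I, T^(-β) := by rw [Finset.sum_const, hIcard, nsmul_eq_mul]
      _ ≤ ∑ j ∈ I, p j := Finset.sum_le_sum (fun j hj => hplow j (hImem j hj).1 (hImem j hj).2)
  have hSJ : T^(γ0-β) - T^(γ-β) ≤ ∑ j ∈ J, p j := by
    have hJcard : J.card = t + 1 - b2 := Nat.card_Icc b2 t
    have hJcardR : T^γ0 - T^γ ≤ (J.card:ℝ) := by
      rw [hJcard]
      have hc : ((t + 1 - b2 : ℕ):ℝ) = T + 1 - (b2:ℝ) := by
        rw [Nat.cast_sub (by omega)]; push_cast; ring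
      rw [hc]
      have hb2R : (b2:ℝ) = (s (k+1):ℝ) + (cg:ℝ) := by rw [hb2]; push_cast; ring
      rw [hb2R]
      linarith
    calc T^(γ0-β) - T^(γ-β) = (T^γ0 - T^γ) * T^(-β) := by
          rw [sub_mul, ← Real.rpow_add hT0, ← Real.rpow_add hT0]; ring_nf
      _ ≤ (J.card:ℝ) * T^(-β) := mul_le_mul_of_nonneg_right hJcardR hTnb
      _ = ∑ _j ∈ J, T^(-β) := by rw [Finset.sum_const, nsmul_eq_mul]
      _ ≤ ∑ j ∈ J, p j := Finset.sum_le_sum (fun j hj => hplow j (hJmem j hj).1 (hJmem j hj).2)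
  have hbad1 : ℙ {ω | ∀ j ∈ J, Z j ω = 0} ≤ ENNReal.ofReal (Real.exp (-(T^(γ0-β) - T^(γ-β)))) := by
    refine le_trans (prob_all_zero_le hZm hZ01 hind J p
      (fun j hj => hZp j (hJmem j hj).1) (fun j _ => hp0 j)
      (fun j hj => hp1 j (hJmem j hj).1)) ?_
    exact ENNReal.ofReal_le_ofReal (Real.exp_le_exp.2 (by linarith))
  have hbadZ : ℙ {ω | Z 1 ω = 0} = 0 := by
    have h := prob_zero_eq (Z := Z) 1 (hZm 1) (hZ01 1) (hZp 1 le_rfl) (hp0 1)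
    rw [h]
    norm_num
  exact ⟨h2k, hb2t, hSI, hbad1, hbadZ⟩

lemma part1 [IsProbabilityMeasure (ℙ : Measure Ω)]
    (γ0 β γ : ℝ) (hβ0 : 0 < β) (hβγ : β < γ) (hγγ0 : γ < γ0) (hγ01 : γ0 ≤ 1)
    (t M : ℕ) (s : ℕ → ℕ) (Z : ℕ → Ω → ℕ)
    (ht1 : 1 ≤ t)
    (hC2 : (t:ℝ)^γ + 1 ≤ (t:ℝ)^γ0)
    (hC3 : (3*(t:ℝ)+1) * Real.exp (-((t:ℝ)^(γ0-β) - (t:ℝ)^(γ-β))) ≤ 1)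
    (hM : 2 ≤ M) (hs1 : s 1 = 1) (hsM : s M = t)
    (hmono : ∀ k : ℕ, 1 ≤ k → k < M → s k < s (k + 1))
    (hgap : ∀ k : ℕ, 1 ≤ k → k < M → (t:ℝ)^γ0 ≤ (s (k + 1) : ℝ) - (s k : ℝ))
    (hZm : ∀ j, Measurable (Z j)) (hZ01 : ∀ j ω, Z j ω = 0 ∨ Z j ω = 1)
    (hZp : ∀ j : ℕ, 1 ≤ j → ℙ {ω | Z j ω = 1} = ENNReal.ofReal ((j:ℝ)^(-β)))
    (hind : iIndepFun Z ℙ)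
    (k : ℕ) (hk1 : 1 ≤ k) (hkM : k + 1 < M) :
    (t:ℝ)^(γ-β) ≤ 𝔼[fun ω => (Lidx Z s t γ (k+1) ω : ℝ) - (Uidx Z s t k ω : ℝ)] := by
  classical
  obtain ⟨h2k, hb2t, hSI, hbad1, hbadZ⟩ := setup_facts γ0 β γ hβ0 hβγ hγγ0 hγ01 t M s Z
    ht1 hC2 hM hs1 hsM hmono hgap hZm hZ01 hZp hind k hk1 hkM
  have hT0 : (0:ℝ) < (t:ℝ) := by exact_mod_cast Nat.lt_of_lt_of_le Nat.zero_lt_one ht1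
  have hT1 : (1:ℝ) ≤ (t:ℝ) := Nat.one_le_cast.2 ht1
  set I := Finset.Ico (s (k+1)) (s (k+1) + ⌈(t:ℝ)^γ⌉₊) with hI
  set J := Finset.Icc (s (k+1) + ⌈(t:ℝ)^γ⌉₊) t with hJ
  set bad1 := {ω : Ω | ∀ j ∈ J, Z j ω = 0} with hbad1set
  set badZ := {ω : Ω | Z 1 ω = 0} with hbadZset
  have hbad1m : MeasurableSet bad1 := by
    have h : bad1 = ⋂ j ∈ J, Z j ⁻¹' {0} := by
      ext ω; simp [hbad1set]
    rw [h]
    exact MeasurableSet.biInter (J.countable_toSet)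
      (fun j _ => hZm j (measurableSet_singleton 0))
  have hbadZm : MeasurableSet badZ := hZm 1 (measurableSet_singleton 0)
  set c : ℝ := 3*(t:ℝ)+1 with hc
  have hc0 : (0:ℝ) ≤ c := by rw [hc]; linarith
  set X : Ω → ℝ := fun ω => ∑ j ∈ I, (Z j ω : ℝ) with hX
  set f : Ω → ℝ := fun ω => (Lidx Z s t γ (k+1) ω : ℝ) - (Uidx Z s t k ω : ℝ) with hf
  set g : Ω → ℝ := fun ω => 1 + X ω - Set.indicator bad1 (fun _ => c) ω
    - Set.indicator badZ (fun _ => c) ω with hg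
  have hX_card : ∀ ω, X ω = ((I.filter (fun j => Z j ω = 1)).card : ℝ) :=
    fun ω => sum_bern_eq_card Z hZ01 I ω
  have hX_nonneg : ∀ ω, 0 ≤ X ω :=
    fun ω => Finset.sum_nonneg (fun j _ => Nat.cast_nonneg _)
  have hcgT : (⌈(t:ℝ)^γ⌉₊:ℝ) ≤ (t:ℝ) + 1 := by
    have h1 : (t:ℝ)^γ ≤ (t:ℝ) := by
      have := Real.rpow_le_rpow_of_exponent_le hT1 (by linarith : γ ≤ (1:ℝ))
      rwa [Real.rpow_one] at this
    have h2 := Nat.ceil_lt_add_one (Real.rpow_nonneg hT0.le γ)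
    linarith
  have hX_le : ∀ ω, X ω ≤ (t:ℝ) + 1 := by
    intro ω
    rw [hX_card ω]
    have h1 : (I.filter (fun j => Z j ω = 1)).card ≤ I.card := Finset.card_filter_le _ _
    have h2 : I.card = ⌈(t:ℝ)^γ⌉₊ := by rw [hI, Nat.card_Ico]; omega
    have h3 : ((I.filter (fun j => Z j ω = 1)).card : ℝ) ≤ (⌈(t:ℝ)^γ⌉₊ : ℝ) := by
      exact_mod_cast h2 ▸ h1
    linarith
  have hf_lb : ∀ ω, -(t:ℝ) ≤ f ω := by
    intro ω
    have hU : (Uidx Z s t k ω : ℝ) ≤ (t:ℝ) := Nat.cast_le.2 (Uidx_le Z s t k ω)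
    have hL : (0:ℝ) ≤ (Lidx Z s t γ (k+1) ω : ℝ) := Nat.cast_nonneg _
    rw [hf]; dsimp only; linarith
  have hf_ub : ∀ ω, f ω ≤ (t:ℝ) := by
    intro ω
    have hL : (Lidx Z s t γ (k+1) ω : ℝ) ≤ (t:ℝ) := Nat.cast_le.2 (Lidx_le Z s t γ (k+1) ω)
    have hU : (0:ℝ) ≤ (Uidx Z s t k ω : ℝ) := Nat.cast_nonneg _
    rw [hf]; dsimp only; linarith
  have hfg : ∀ ω, g ω ≤ f ω := by
    intro ω
    by_cases h1 : ω ∈ bad1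
    · have hgle : g ω ≤ 1 + X ω - c := by
        rw [hg]; dsimp only
        rw [Set.indicator_of_mem h1]
        have h0 : (0:ℝ) ≤ Set.indicator badZ (fun _ => c) ω :=
          Set.indicator_nonneg (fun _ _ => hc0) ω
        linarith
      have := hX_le ω
      have := hf_lb ω
      rw [hc] at hgle
      linarith
    · by_cases h2 : ω ∈ badZ
      · have hgle : g ω ≤ 1 + X ω - c := by
          rw [hg]; dsimp only
          rw [Set.indicator_of_notMem h1, Set.indicator_of_mem h2]
          linarith
        have := hX_le ω
        have := hf_lb ω
        rw [hc] at hgle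
        linarith
      · have hZ1 : Z 1 ω = 1 := by
          rcases hZ01 1 ω with h | h
          · exact absurd h h2
          · exact h
        have hj2 : ∃ j ∈ J, Z j ω = 1 := by
          by_contra hcon
          push_neg at hcon
          exact h1 (fun j hj => (hZ01 j ω).resolve_right (hcon j hj))
        have hdet := det_core Z s t γ k ht1 h2k hb2t ω hZ1 hj2
        have hdet' : (Uidx Z s t k ω : ℝ) + 1 + ((I.filter (fun j => Z j ω = 1)).card : ℝ)
            ≤ (Lidx Z s t γ (k+1) ω : ℝ) := by exact_mod_cast hdet
        rw [hg, hf]; dsimp only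
        rw [Set.indicator_of_notMem h1, Set.indicator_of_notMem h2, hX_card ω]
        linarith
  -- integrability
  have hXint : Integrable X ℙ := by
    rw [hX]
    exact integrable_finset_sum I
      (fun j _ => integrable_comp_bern j (hZm j) (hZ01 j) (fun n => (n:ℝ)))
  have hi1int : Integrable (Set.indicator bad1 (fun _ => c)) ℙ :=
    (integrable_const c).indicator hbad1m
  have hi2int : Integrable (Set.indicator badZ (fun _ => c)) ℙ :=
    (integrable_const c).indicator hbadZm
  have hgint : Integrable g ℙ := by
    rw [hg]
    exact (((integrable_const 1).add hXint).sub hi1int).sub hi2int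
  have hfmeas : Measurable f := by
    rw [hf]
    exact ((measurable_of_countable (Nat.cast : ℕ → ℝ)).comp
        (measurable_Lidx Z hZm s t γ (k+1))).sub
      ((measurable_of_countable (Nat.cast : ℕ → ℝ)).comp (measurable_Uidx Z hZm s t k))
  have hfint : Integrable f ℙ := by
    apply Integrable.mono' (integrable_const ((t:ℝ))) hfmeas.aestronglyMeasurable
    apply Filter.Eventually.of_forall
    intro ω
    rw [Real.norm_eq_abs, abs_le]
    exact ⟨by linarith [hf_lb ω], hf_ub ω⟩
  have hEfg : ∫ ω, g ω ∂ℙ ≤ ∫ ω, f ω ∂ℙ := integral_mono hgint hfint hfg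
  -- compute E[g]
  have hEX : ∫ ω, X ω ∂ℙ = ∑ j ∈ I, (j:ℝ)^(-β) := by
    rw [hX]
    rw [integral_finset_sum I
      (fun j _ => integrable_comp_bern j (hZm j) (hZ01 j) (fun n => (n:ℝ)))]
    apply Finset.sum_congr rfl
    intro j hj
    have hj1 : 1 ≤ j := by
      rw [hI, Finset.mem_Ico] at hj; omega
    have hh := integral_comp_bern (Z := Z) j (hZm j) (hZ01 j) (fun n => (n:ℝ))
    simp only [Nat.cast_zero, Nat.cast_one] at hh
    rw [hh, hZp j hj1, ENNReal.toReal_ofReal (Real.rpow_nonneg (Nat.cast_nonneg j) _)]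
    ring
  have hEg : ∫ ω, g ω ∂ℙ
      = 1 + (∑ j ∈ I, (j:ℝ)^(-β)) - c * (ℙ bad1).toReal - c * (ℙ badZ).toReal := by
    rw [hg]
    dsimp only
    have hint1 : Integrable (fun ω => 1 + X ω) ℙ := by exact (integrable_const 1).add hXint
    have hint2 : Integrable (fun ω => 1 + X ω - Set.indicator bad1 (fun _ => c) ω) ℙ := by
      exact hint1.sub hi1int
    rw [integral_sub hint2 hi2int, integral_sub hint1 hi1int,
      integral_add (integrable_const 1) hXint]
    rw [integral_indicator_const _ hbad1m, integral_indicator_const _ hbadZm]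
    rw [integral_const]
    simp only [measureReal_def, measure_univ, ENNReal.toReal_one, smul_eq_mul, one_mul]
    rw [hEX]
    ring
  have hr1 : (ℙ bad1).toReal ≤ Real.exp (-((t:ℝ)^(γ0-β) - (t:ℝ)^(γ-β))) :=
    ENNReal.toReal_le_of_le_ofReal (Real.exp_pos _).le hbad1
  have hr2 : (ℙ badZ).toReal = 0 := by rw [hbadZ]; simp
  have hcr : c * (ℙ bad1).toReal ≤ 1 := by
    calc c * (ℙ bad1).toReal ≤ c * Real.exp (-((t:ℝ)^(γ0-β) - (t:ℝ)^(γ-β))) :=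
          mul_le_mul_of_nonneg_left hr1 hc0
      _ ≤ 1 := hC3
  have hfinal : (t:ℝ)^(γ-β) ≤ ∫ ω, g ω ∂ℙ := by
    rw [hEg, hr2]
    linarith
  exact le_trans hfinal hEfg

end Parts
section Part2
variable {Ω : Type} [MeasureSpace Ω]

lemma M_le_t (t M : ℕ) (s : ℕ → ℕ) (hM : 2 ≤ M) (hs1 : s 1 = 1) (hsM : s M = t)
    (hmono : ∀ k : ℕ, 1 ≤ k → k < M → s k < s (k + 1)) : M ≤ t := by
  have key : ∀ b : ℕ, 1 ≤ b → b ≤ M → b ≤ s b := by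
    intro b
    induction b with
    | zero => omega
    | succ n ih =>
      intro _ hbM
      rcases Nat.eq_or_lt_of_le (show 1 ≤ n + 1 by omega) with h | h
      · have hn : n = 0 := by omega
        subst hn
        simp [hs1]
      · have h1 : n ≤ s n := ih (by omega) (by omega)
        have h2 : s n < s (n+1) := hmono n (by omega) (by omega)
        omega
  have := key M (by omega) le_rfl
  omega

lemma part2 [IsProbabilityMeasure (ℙ : Measure Ω)]
    (γ0 β γ : ℝ) (hβ0 : 0 < β) (hβγ : β < γ) (hγγ0 : γ < γ0) (hγ01 : γ0 ≤ 1)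
    (t M : ℕ) (s : ℕ → ℕ) (Z : ℕ → Ω → ℕ)
    (ht1 : 1 ≤ t)
    (hC2 : (t:ℝ)^γ + 1 ≤ (t:ℝ)^γ0)
    (hC4 : 2*(t:ℝ)^(γ-β) ≤ (t:ℝ)^(γ0-β))
    (hC5 : 2 * Real.exp (-((1 - Real.log 2)/4) * (t:ℝ)^(γ-β)) ≤ 1)
    (hM : 2 ≤ M) (hs1 : s 1 = 1) (hsM : s M = t)
    (hmono : ∀ k : ℕ, 1 ≤ k → k < M → s k < s (k + 1))
    (hgap : ∀ k : ℕ, 1 ≤ k → k < M → (t:ℝ)^γ0 ≤ (s (k + 1) : ℝ) - (s k : ℝ))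
    (hZm : ∀ j, Measurable (Z j)) (hZ01 : ∀ j ω, Z j ω = 0 ∨ Z j ω = 1)
    (hZp : ∀ j : ℕ, 1 ≤ j → ℙ {ω | Z j ω = 1} = ENNReal.ofReal ((j:ℝ)^(-β)))
    (hind : iIndepFun Z ℙ) :
    1 - ENNReal.ofReal ((t:ℝ) * Real.exp (-((1 - Real.log 2)/4) * (t:ℝ)^(γ-β)))
      ≤ ℙ {ω | ∀ k : ℕ, 1 ≤ k → k + 1 < M →
          (t:ℝ)^(γ-β)/2 ≤ (Lidx Z s t γ (k+1) ω : ℝ) - (Uidx Z s t k ω : ℝ)} := by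
  classical
  set C : ℝ := (1 - Real.log 2)/4 with hCdef
  set x : ℝ := (t:ℝ)^(γ-β) with hxdef
  have hlog2 : Real.log 2 < 1 := by
    have h1 : Real.log 2 < Real.log (Real.exp 1) := by
      apply Real.log_lt_log two_pos
      have := Real.exp_one_gt_d9
      linarith
    rwa [Real.log_exp] at h1
  have hlog2pos : 0 < Real.log 2 := Real.log_pos one_lt_two
  have hCpos : 0 < C := by rw [hCdef]; linarith
  have hx0 : 0 ≤ x := Real.rpow_nonneg (Nat.cast_nonneg t) _
  set A := {ω : Ω | ∀ k : ℕ, 1 ≤ k → k + 1 < M →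
      x/2 ≤ (Lidx Z s t γ (k+1) ω : ℝ) - (Uidx Z s t k ω : ℝ)} with hA
  set B : ℕ → Set Ω := fun k => {ω : Ω |
      (Lidx Z s t γ (k+1) ω : ℝ) - (Uidx Z s t k ω : ℝ) < x/2} with hB
  -- per k bound
  have hBk : ∀ k : ℕ, 1 ≤ k → k + 1 < M →
      ℙ (B k) ≤ ENNReal.ofReal (2 * Real.exp (-(2*C) * x)) := by
    intro k hk1 hkM
    obtain ⟨h2k, hb2t, hSI, hbad1, hbadZ⟩ := setup_facts γ0 β γ hβ0 hβγ hγγ0 hγ01 t M s Z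
      ht1 hC2 hM hs1 hsM hmono hgap hZm hZ01 hZp hind k hk1 hkM
    set I := Finset.Ico (s (k+1)) (s (k+1) + ⌈(t:ℝ)^γ⌉₊) with hI
    set J := Finset.Icc (s (k+1) + ⌈(t:ℝ)^γ⌉₊) t with hJ
    set bad1 := {ω : Ω | ∀ j ∈ J, Z j ω = 0} with hbad1set
    set badZ := {ω : Ω | Z 1 ω = 0} with hbadZset
    set Xev := {ω : Ω | (∑ j ∈ I, (Z j ω : ℝ)) ≤ x/2 - 1} with hXev
    have hIj1 : ∀ j ∈ I, 1 ≤ j := by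
      intro j hj; rw [hI, Finset.mem_Ico] at hj; omega
    have hsubset : B k ⊆ bad1 ∪ badZ ∪ Xev := by
      intro ω hω
      by_cases h1 : ω ∈ bad1
      · exact Or.inl (Or.inl h1)
      by_cases h2 : ω ∈ badZ
      · exact Or.inl (Or.inr h2)
      refine Or.inr ?_
      have hZ1 : Z 1 ω = 1 := (hZ01 1 ω).resolve_left h2
      have hj2 : ∃ j ∈ J, Z j ω = 1 := by
        by_contra hcon
        push_neg at hcon
        exact h1 (fun j hj => (hZ01 j ω).resolve_right (hcon j hj))
      have hdet := det_core Z s t γ k ht1 h2k hb2t ω hZ1 hj2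
      have hdet' : (Uidx Z s t k ω : ℝ) + 1 + ((I.filter (fun j => Z j ω = 1)).card : ℝ)
          ≤ (Lidx Z s t γ (k+1) ω : ℝ) := by exact_mod_cast hdet
      have hXc : (∑ j ∈ I, (Z j ω : ℝ)) = ((I.filter (fun j => Z j ω = 1)).card : ℝ) :=
        sum_bern_eq_card Z hZ01 I ω
      have hωB : (Lidx Z s t γ (k+1) ω : ℝ) - (Uidx Z s t k ω : ℝ) < x/2 := hω
      rw [hXev]
      simp only [Set.mem_setOf_eq]
      rw [hXc]
      linarith
    have hchern : ℙ Xev ≤ ENNReal.ofReal (Real.exp (Real.log 2 * (x/2-1) - (∑ j ∈ I, (j:ℝ)^(-β))/2)) :=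
      chernoff_lower hZm hZ01 hind I (fun j => (j:ℝ)^(-β))
        (fun j hj => hZp j (hIj1 j hj))
        (fun j _ => Real.rpow_nonneg (Nat.cast_nonneg j) _)
        (fun j hj => by
          have h := Real.rpow_le_rpow_of_exponent_le (Nat.one_le_cast.2 (hIj1 j hj))
            (by linarith : -β ≤ (0:ℝ))
          simpa using h) (x/2-1)
    have hchern2 : ℙ Xev ≤ ENNReal.ofReal (Real.exp (-(2*C) * x)) := by
      refine le_trans hchern (ENNReal.ofReal_le_ofReal (Real.exp_le_exp.2 ?_))
      have h1 : Real.log 2 * (x/2-1) ≤ Real.log 2 * (x/2) := by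
        apply mul_le_mul_of_nonneg_left _ hlog2pos.le
        linarith
      have h2 : x ≤ ∑ j ∈ I, (j:ℝ)^(-β) := hSI
      rw [hCdef]
      nlinarith
    have hbad1' : ℙ bad1 ≤ ENNReal.ofReal (Real.exp (-(2*C) * x)) := by
      refine le_trans hbad1 (ENNReal.ofReal_le_ofReal (Real.exp_le_exp.2 ?_))
      have h2C1 : 2*C ≤ 1 := by rw [hCdef]; linarith
      have hx2 : x ≤ (t:ℝ)^(γ0-β) - x := by rw [hxdef]; linarith [hC4]
      nlinarith
    calc ℙ (B k) ≤ ℙ (bad1 ∪ badZ ∪ Xev) := measure_mono hsubset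
      _ ≤ ℙ (bad1 ∪ badZ) + ℙ Xev := measure_union_le _ _
      _ ≤ ℙ bad1 + ℙ badZ + ℙ Xev := add_le_add_left (measure_union_le _ _) _
      _ = ℙ bad1 + ℙ Xev := by rw [hbadZ, add_zero]
      _ ≤ ENNReal.ofReal (Real.exp (-(2*C) * x)) + ENNReal.ofReal (Real.exp (-(2*C) * x)) :=
          add_le_add hbad1' hchern2
      _ = ENNReal.ofReal (2 * Real.exp (-(2*C) * x)) := by
          rw [← ENNReal.ofReal_add (Real.exp_pos _).le (Real.exp_pos _).le]
          congr 1; ring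
  -- union bound
  have hcompl : Aᶜ ⊆ ⋃ k ∈ Finset.Icc 1 (M-2), B k := by
    intro ω hω
    rw [hA] at hω
    simp only [Set.mem_compl_iff, Set.mem_setOf_eq, not_forall] at hω
    obtain ⟨k, hk1, hkM, hlt⟩ := hω
    simp only [Set.mem_iUnion, exists_prop]
    exact ⟨k, by rw [Finset.mem_Icc]; omega,
      by rw [hB]; simp only [Set.mem_setOf_eq]; linarith⟩
  have hsum : ℙ Aᶜ ≤ ∑ k ∈ Finset.Icc 1 (M-2), ℙ (B k) :=
    le_trans (measure_mono hcompl) (measure_biUnion_finset_le _ _)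
  have hsum2 : ∑ k ∈ Finset.Icc 1 (M-2), ℙ (B k)
      ≤ (M-2 : ℕ) * ENNReal.ofReal (2 * Real.exp (-(2*C) * x)) := by
    have hcard : (Finset.Icc 1 (M-2)).card = M - 2 := by rw [Nat.card_Icc]; omega
    calc ∑ k ∈ Finset.Icc 1 (M-2), ℙ (B k)
        ≤ ∑ _k ∈ Finset.Icc 1 (M-2), ENNReal.ofReal (2 * Real.exp (-(2*C) * x)) := by
          apply Finset.sum_le_sum
          intro k hk
          rw [Finset.mem_Icc] at hk
          exact hBk k hk.1 (by omega)
      _ = (M-2 : ℕ) * ENNReal.ofReal (2 * Real.exp (-(2*C) * x)) := by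
          rw [Finset.sum_const, hcard, nsmul_eq_mul]
  have hfinalR : ((M-2 : ℕ):ℝ) * (2 * Real.exp (-(2*C) * x)) ≤ (t:ℝ) * Real.exp (-C * x) := by
    have hMt : ((M-2:ℕ):ℝ) ≤ (t:ℝ) := by
      have h := M_le_t t M s hM hs1 hsM hmono
      have h2 : (M-2:ℕ) ≤ t := by omega
      exact_mod_cast h2
    have hexp : 2 * Real.exp (-(2*C) * x) ≤ Real.exp (-C * x) := by
      have h1 : Real.exp (-(2*C) * x) = Real.exp (-C * x) * Real.exp (-C*x) := by
        rw [← Real.exp_add]; congr 1; ring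
      have h2 : 2 * Real.exp (-C*x) ≤ 1 := hC5
      nlinarith [Real.exp_pos (-C*x), Real.exp_pos (-(2*C)*x)]
    have h2e : 0 ≤ 2 * Real.exp (-(2*C) * x) := by positivity
    calc ((M-2 : ℕ):ℝ) * (2 * Real.exp (-(2*C) * x))
        ≤ (t:ℝ) * (2 * Real.exp (-(2*C) * x)) := mul_le_mul_of_nonneg_right hMt h2e
      _ ≤ (t:ℝ) * Real.exp (-C * x) := mul_le_mul_of_nonneg_left hexp (Nat.cast_nonneg t)
  have hAc : ℙ Aᶜ ≤ ENNReal.ofReal ((t:ℝ) * Real.exp (-C * x)) := by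
    refine le_trans hsum (le_trans hsum2 ?_)
    calc ((M-2:ℕ):ENNReal) * ENNReal.ofReal (2 * Real.exp (-(2*C) * x))
        = ENNReal.ofReal ((M-2:ℕ)) * ENNReal.ofReal (2 * Real.exp (-(2*C) * x)) := by
          rw [ENNReal.ofReal_natCast]
      _ = ENNReal.ofReal (((M-2:ℕ):ℝ) * (2 * Real.exp (-(2*C) * x))) := by
          rw [← ENNReal.ofReal_mul (Nat.cast_nonneg _)]
      _ ≤ ENNReal.ofReal ((t:ℝ) * Real.exp (-C * x)) := ENNReal.ofReal_le_ofReal hfinalR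
  have hone : (1:ENNReal) ≤ ℙ A + ℙ Aᶜ := by
    have h := measure_union_le (μ := (ℙ : Measure Ω)) A Aᶜ
    rw [Set.union_compl_self, measure_univ] at h
    exact h
  rw [tsub_le_iff_right]
  calc (1:ENNReal) ≤ ℙ A + ℙ Aᶜ := hone
    _ ≤ ℙ A + ENNReal.ofReal ((t:ℝ) * Real.exp (-C * x)) := add_le_add_right hAc _
end Part2


/-- Suppose `min_k (s_{k+1} − s_k) ≥ t^{γ0}` and fix `0 < β < γ < γ0`. Then
`E(L_{k+1} − U_k) ≥ t^{γ−β}` for all sufficiently large `t`, and there is `C > 0` such that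
for all sufficiently large `t`,
`P(∩_k {L_{k+1} − U_k ≥ t^{γ−β}/2}) ≥ 1 − t·exp(−C·t^{γ−β})`. -/
theorem gap_between_epoch_indices
    (γ0 β γ : ℝ) (hγ00 : 0 < γ0) (hγ01 : γ0 ≤ 1)
    (hβ0 : 0 < β) (hβγ : β < γ) (hγγ0 : γ < γ0) :
    (∃ t0 : ℕ, ∀ t : ℕ, t0 ≤ t →
      ∀ (Ω : Type) (_ : MeasureSpace Ω), IsProbabilityMeasure (ℙ : Measure Ω) →
      ∀ (M : ℕ) (s : ℕ → ℕ) (Z : ℕ → Ω → ℕ),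
        2 ≤ M → s 1 = 1 → s M = t →
        (∀ k : ℕ, 1 ≤ k → k < M → s k < s (k + 1)) →
        (∀ k : ℕ, 1 ≤ k → k < M → (t : ℝ) ^ γ0 ≤ (s (k + 1) : ℝ) - (s k : ℝ)) →
        (∀ j, Measurable (Z j)) →
        (∀ j, ∀ ω, Z j ω = 0 ∨ Z j ω = 1) →
        (∀ j : ℕ, 1 ≤ j → ℙ {ω | Z j ω = 1} = ENNReal.ofReal ((j : ℝ) ^ (-β))) →
        iIndepFun Z ℙ →
        ∀ k : ℕ, 1 ≤ k → k + 1 < M →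
          (t : ℝ) ^ (γ - β)
            ≤ 𝔼[fun ω => (Lidx Z s t γ (k + 1) ω : ℝ) - (Uidx Z s t k ω : ℝ)]) ∧
    (∃ C : ℝ, 0 < C ∧ ∃ t0 : ℕ, ∀ t : ℕ, t0 ≤ t →
      ∀ (Ω : Type) (_ : MeasureSpace Ω), IsProbabilityMeasure (ℙ : Measure Ω) →
      ∀ (M : ℕ) (s : ℕ → ℕ) (Z : ℕ → Ω → ℕ),
        2 ≤ M → s 1 = 1 → s M = t →
        (∀ k : ℕ, 1 ≤ k → k < M → s k < s (k + 1)) →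
        (∀ k : ℕ, 1 ≤ k → k < M → (t : ℝ) ^ γ0 ≤ (s (k + 1) : ℝ) - (s k : ℝ)) →
        (∀ j, Measurable (Z j)) →
        (∀ j, ∀ ω, Z j ω = 0 ∨ Z j ω = 1) →
        (∀ j : ℕ, 1 ≤ j → ℙ {ω | Z j ω = 1} = ENNReal.ofReal ((j : ℝ) ^ (-β))) →
        iIndepFun Z ℙ →
        1 - ENNReal.ofReal ((t : ℝ) * Real.exp (-C * (t : ℝ) ^ (γ - β)))
          ≤ ℙ {ω | ∀ k : ℕ, 1 ≤ k → k + 1 < M →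
              (t : ℝ) ^ (γ - β) / 2
                ≤ (Lidx Z s t γ (k + 1) ω : ℝ) - (Uidx Z s t k ω : ℝ)}) := by
  have hlog2 : Real.log 2 < 1 := by
    have h1 : Real.log 2 < Real.log (Real.exp 1) := by
      apply Real.log_lt_log two_pos
      have := Real.exp_one_gt_d9
      linarith
    rwa [Real.log_exp] at h1
  have hCpos : 0 < (1 - Real.log 2)/4 := by linarith
  constructor
  · obtain ⟨t0, ht0⟩ := eventually_conds γ0 β γ 1 hβ0 hβγ hγγ0 hγ01 one_pos
    refine ⟨t0, ?_⟩
    intro t ht Ω _ hP M s Z hM hs1 hsM hmono hgap hZm hZ01 hZp hind k hk1 hkM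
    haveI := hP
    obtain ⟨h1, h2, h3, _, _⟩ := ht0 t ht
    exact part1 γ0 β γ hβ0 hβγ hγγ0 hγ01 t M s Z h1 h2 h3 hM hs1 hsM hmono hgap
      hZm hZ01 hZp hind k hk1 hkM
  · refine ⟨(1 - Real.log 2)/4, hCpos, ?_⟩
    obtain ⟨t0, ht0⟩ := eventually_conds γ0 β γ ((1 - Real.log 2)/4) hβ0 hβγ hγγ0 hγ01 hCpos
    refine ⟨t0, ?_⟩
    intro t ht Ω _ hP M s Z hM hs1 hsM hmono hgap hZm hZ01 hZp hind
    haveI := hP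
    obtain ⟨h1, h2, _, h4, h5⟩ := ht0 t ht
    exact part2 γ0 β γ hβ0 hβγ hγγ0 hγ01 t M s Z h1 h2 h4 h5 hM hs1 hsM hmono hgap
      hZm hZ01 hZp hind
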